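/- In the braid group B_n (n ≥ 3), with λ_{n,r} = δ_n^r δ_{n−1}^{−r} (r ≥ 1), the element λ_{n,0}^{−1} λ_{n,1} := a_{n−1,n}^{−1} δ_n δ_{n−1}^{−1} equals δ_n a_{n−2,n−1}^{−1} δ_{n−1}^{−1}, and hence is σ_{n−1}-positive. -/

import Mathlib

/-- Relations of the braid group `B_n` on generators `σ_1, …, σ_{n-1}`
(indexed by natural numbers; the generators of index `0` or `≥ n` are killed,
so that the presented group is exactly `B_n`). -/
def braidRels (n : ℕ) : Set (FreeGroup ℕ) :=
  {r | (∃ i j : ℕ, 1 ≤ i ∧ i + 2 ≤ j ∧ j ≤ n - 1 ∧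
          r = FreeGroup.of i * FreeGroup.of j * (FreeGroup.of i)⁻¹ * (FreeGroup.of j)⁻¹) ∨
       (∃ i : ℕ, 1 ≤ i ∧ i + 1 ≤ n - 1 ∧
          r = FreeGroup.of i * FreeGroup.of (i + 1) * FreeGroup.of i *
              (FreeGroup.of (i + 1) * FreeGroup.of i * FreeGroup.of (i + 1))⁻¹) ∨
       (∃ i : ℕ, (i = 0 ∨ n ≤ i) ∧ r = FreeGroup.of i)}

/-- The braid group `B_n`. -/
def BraidGroup (n : ℕ) : Type := PresentedGroup (braidRels n)

instance (n : ℕ) : Group (BraidGroup n) := by unfold BraidGroup; infer_instance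

/-- The Artin generator `σ_i` of `B_n` (nontrivial for `1 ≤ i ≤ n-1`). -/
def σ (n i : ℕ) : BraidGroup n := PresentedGroup.of i

/-- `δ_{p,q} = σ_p σ_{p+1} ⋯ σ_{q-1}` (equal to `1` when `q ≤ p`). -/
def δδ (n p q : ℕ) : BraidGroup n :=
  ((List.range (q - p)).map (fun k => σ n (p + k))).prod

/-- The Birman–Ko–Lee generator
`a_{p,q} = σ_p ⋯ σ_{q-2} σ_{q-1} σ_{q-2}⁻¹ ⋯ σ_p⁻¹ = δ_{p,q-1} σ_{q-1} δ_{p,q-1}⁻¹`. -/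
def a (n p q : ℕ) : BraidGroup n :=
  δδ n p (q - 1) * σ n (q - 1) * (δδ n p (q - 1))⁻¹

/-- A braid of `B_n` is `σ_i`-positive if it is represented by a word in the
letters `σ_j^{±1}` containing at least one `σ_i`, no `σ_i⁻¹`,
and no letter `σ_j^{±1}` with `j > i`. -/
def SigmaPositive (n i : ℕ) (β : BraidGroup n) : Prop :=
  ∃ w : List (ℕ × Bool),
    ((w.map (fun l => if l.2 then σ n l.1 else (σ n l.1)⁻¹)).prod = β) ∧
    (i, true) ∈ w ∧ (i, false) ∉ w ∧ ∀ l ∈ w, l.1 ≤ i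

lemma rel_one {n : ℕ} {r : FreeGroup ℕ} (h : r ∈ braidRels n) :
    (PresentedGroup.mk (braidRels n) r : BraidGroup n) = 1 :=
  (QuotientGroup.eq_one_iff r).2 (Subgroup.subset_normalClosure h)

lemma sigma_comm {n i j : ℕ} (h1 : 1 ≤ i) (h2 : i + 2 ≤ j) (h3 : j ≤ n - 1) :
    σ n i * σ n j = σ n j * σ n i := by
  have h := rel_one (n := n)
    (r := FreeGroup.of i * FreeGroup.of j * (FreeGroup.of i)⁻¹ * (FreeGroup.of j)⁻¹)
    (Or.inl ⟨i, j, h1, h2, h3, rfl⟩)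
  simp only [map_mul, map_inv] at h
  have h' : σ n i * σ n j * (σ n i)⁻¹ = σ n j := mul_inv_eq_one.mp h
  exact mul_inv_eq_iff_eq_mul.mp h'

lemma sigma_braid {n i : ℕ} (h1 : 1 ≤ i) (h2 : i + 1 ≤ n - 1) :
    σ n i * σ n (i+1) * σ n i = σ n (i+1) * σ n i * σ n (i+1) := by
  have h := rel_one (n := n)
    (r := FreeGroup.of i * FreeGroup.of (i + 1) * FreeGroup.of i *
              (FreeGroup.of (i + 1) * FreeGroup.of i * FreeGroup.of (i + 1))⁻¹)
    (Or.inr (Or.inl ⟨i, h1, h2, rfl⟩))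
  simp only [map_mul, map_inv] at h
  have h' := mul_inv_eq_one.mp h
  exact h'

/-- `σ (m+2)` commutes with all of `σ 1, …, σ (m+1-1)` hence with a prefix product. -/
lemma delta_comm_sigma (m : ℕ) (t : ℕ) (ht : t ≤ m) :
    σ (m+3) (m+2) * ((List.range t).map (fun k => σ (m+3) (1 + k))).prod
      = ((List.range t).map (fun k => σ (m+3) (1 + k))).prod * σ (m+3) (m+2) := by
  induction t with
  | zero => simp
  | succ s ih =>
    have hs : s ≤ m := Nat.le_of_succ_le ht
    rw [List.range_succ, List.map_append, List.prod_append]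
    simp only [List.map_cons, List.map_nil, List.prod_cons, List.prod_nil, mul_one]
    have hc : σ (m+3) (1 + s) * σ (m+3) (m+2) = σ (m+3) (m+2) * σ (m+3) (1 + s) := by
      apply sigma_comm (by omega) (by omega) (by omega)
    rw [← mul_assoc, ih hs, mul_assoc, ← hc, mul_assoc]

lemma delta_split (n p q : ℕ) (h : p ≤ q) :
    δδ n p (q + 1) = δδ n p q * σ n q := by
  unfold δδ
  have : q + 1 - p = (q - p) + 1 := by omega
  rw [this, List.range_succ, List.map_append, List.prod_append]
  simp only [List.map_cons, List.map_nil, List.prod_cons, List.prod_nil, mul_one]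
  congr 2
  omega

theorem stmt19 (n : ℕ) (hn : 3 ≤ n) :
    (a n (n - 1) n)⁻¹ * (δδ n 1 n * (δδ n 1 (n - 1))⁻¹) =
      δδ n 1 n * (a n (n - 2) (n - 1))⁻¹ * (δδ n 1 (n - 1))⁻¹ ∧
    SigmaPositive n (n - 1)
      ((a n (n - 1) n)⁻¹ * (δδ n 1 n * (δδ n 1 (n - 1))⁻¹)) := by
  obtain ⟨m, rfl⟩ : ∃ m, n = m + 3 := ⟨n - 3, by omega⟩
  have e1 : m + 3 - 1 = m + 2 := rfl
  have e2 : m + 3 - 2 = m + 1 := rfl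
  -- a's are single generators
  have ha1 : a (m+3) (m+2) (m+3) = σ (m+3) (m+2) := by
    unfold a δδ; simp [e1]
  have ha2 : a (m+3) (m+1) (m+2) = σ (m+3) (m+1) := by
    unfold a δδ; simp
  -- split δ_n
  have hsplit1 : δδ (m+3) 1 (m+3) = δδ (m+3) 1 (m+2) * σ (m+3) (m+2) :=
    delta_split (m+3) 1 (m+2) (by omega)
  have hsplit2 : δδ (m+3) 1 (m+2) = δδ (m+3) 1 (m+1) * σ (m+3) (m+1) :=
    delta_split (m+3) 1 (m+1) (by omega)
  -- key lemma: δ_n * σ (m+1) = σ (m+2) * δ_n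
  have key : δδ (m+3) 1 (m+3) * σ (m+3) (m+1) = σ (m+3) (m+2) * δδ (m+3) 1 (m+3) := by
    have hbr : σ (m+3) (m+1) * σ (m+3) (m+2) * σ (m+3) (m+1)
        = σ (m+3) (m+2) * σ (m+3) (m+1) * σ (m+3) (m+2) :=
      sigma_braid (by omega) (by omega)
    have hD : σ (m+3) (m+2) * δδ (m+3) 1 (m+1) = δδ (m+3) 1 (m+1) * σ (m+3) (m+2) := by
      have := delta_comm_sigma m m le_rfl
      unfold δδ
      simpa using this
    calc δδ (m+3) 1 (m+3) * σ (m+3) (m+1)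
        = δδ (m+3) 1 (m+1) * (σ (m+3) (m+1) * σ (m+3) (m+2) * σ (m+3) (m+1)) := by
          rw [hsplit1, hsplit2]; group
      _ = δδ (m+3) 1 (m+1) * (σ (m+3) (m+2) * σ (m+3) (m+1) * σ (m+3) (m+2)) := by rw [hbr]
      _ = (δδ (m+3) 1 (m+1) * σ (m+3) (m+2)) * (σ (m+3) (m+1) * σ (m+3) (m+2)) := by group
      _ = σ (m+3) (m+2) * δδ (m+3) 1 (m+3) := by
          rw [← hD, hsplit1, hsplit2]; group
  have key' : (σ (m+3) (m+2))⁻¹ * δδ (m+3) 1 (m+3) = δδ (m+3) 1 (m+3) * (σ (m+3) (m+1))⁻¹ := by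
    rw [inv_mul_eq_iff_eq_mul, ← mul_assoc, ← key]; group
  have part1 : (a (m+3) (m+3-1) (m+3))⁻¹ * (δδ (m+3) 1 (m+3) * (δδ (m+3) 1 (m+3-1))⁻¹) =
      δδ (m+3) 1 (m+3) * (a (m+3) (m+3-2) (m+3-1))⁻¹ * (δδ (m+3) 1 (m+3-1))⁻¹ := by
    rw [e1, e2, ha1, ha2, ← mul_assoc, key', mul_assoc]
  refine ⟨part1, ?_⟩
  -- SigmaPositive
  rw [e1] at part1 ⊢
  rw [part1]
  refine ⟨((List.range (m+2)).map (fun k => (1 + k, true))) ++ [(m+1, false)] ++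
    (((List.range (m+1)).map (fun k => (1 + k, false))).reverse), ?_, ?_, ?_, ?_⟩
  · rw [e2, ha2]
    have hc1 : ((fun l : ℕ × Bool => if l.2 = true then σ (m+3) l.1 else (σ (m+3) l.1)⁻¹) ∘
        fun k => (1 + k, true)) = fun k => σ (m+3) (1+k) := by funext k; simp
    have hc2 : ((fun l : ℕ × Bool => if l.2 = true then σ (m+3) l.1 else (σ (m+3) l.1)⁻¹) ∘
        fun k => (1 + k, false)) = (fun x => x⁻¹) ∘ fun k => σ (m+3) (1+k) := by funext k; simp
    have hrev : ∀ (l : List (BraidGroup (m+3))), ((l.map (fun x => x⁻¹)).reverse).prod = l.prod⁻¹ := by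
      intro l; induction l with
      | nil => simp
      | cons x xs ih => simp [ih]
    simp only [List.map_append, List.prod_append, List.map_map, List.map_reverse,
      List.map_cons, List.map_nil, List.prod_cons, List.prod_nil, mul_one, hc1, hc2]
    rw [← List.map_map, hrev]
    have hd1 : δδ (m+3) 1 (m+3) = ((List.range (m+2)).map (fun k => σ (m+3) (1+k))).prod := rfl
    have hd2 : δδ (m+3) 1 (m+2) = ((List.range (m+1)).map (fun k => σ (m+3) (1+k))).prod := rfl
    rw [hd1, hd2]
    simp [mul_assoc]
  · simp only [List.mem_append]
    left; left
    simp only [List.mem_map, List.mem_range]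
    refine ⟨m + 1, by omega, ?_⟩; simp [Prod.ext_iff]; omega
  · intro hmem
    simp only [List.mem_append, List.mem_map, List.mem_reverse, List.mem_range,
      List.mem_singleton, Prod.mk.injEq] at hmem
    rcases hmem with (⟨k, hk, hke, hb⟩ | ⟨h1, h2⟩) | ⟨k, hk, hke, hb⟩
    · exact Bool.noConfusion hb
    · omega
    · omega
  · intro l hl
    simp only [List.mem_append, List.mem_map, List.mem_reverse, List.mem_range,
      List.mem_singleton] at hl
    rcases hl with (⟨k, hk, rfl⟩ | rfl) | ⟨k, hk, rfl⟩ <;> simp <;> omega
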